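/- arXiv:1902.01558 — 2 statements merged into one kernel-verified Lean document; each statement's English description precedes it below -/
import Mathlib

section
/- The map σ̂ on sl(3,ℂ) defined by σ̂(X) = -P X^T P⁻¹, where P = diag(ε²,ε⁴,-1)·P₀ with ε = e^{iπ/3} and P₀ the matrix with rows (0,1,0),(1,0,0),(0,0,-1), is a Lie algebra automorphism of order exactly 6. -/
open Matrix Complex

noncomputable section

/-- `ε = e^{iπ/3}`, a primitive sixth root of unity. -/
def ε : ℂ := Complex.exp (Real.pi * Complex.I / 3)

def P₀ : Matrix (Fin 3) (Fin 3) ℂ := !![0, 1, 0; 1, 0, 0; 0, 0, -1]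

def Pmat : Matrix (Fin 3) (Fin 3) ℂ := Matrix.diagonal ![ε ^ 2, ε ^ 4, -1] * P₀

/-- `σ̂(X) = -P Xᵀ P⁻¹`. -/
def sigmaHat (X : Matrix (Fin 3) (Fin 3) ℂ) : Matrix (Fin 3) (Fin 3) ℂ :=
  -(Pmat * Xᵀ * Pmat⁻¹)


lemma heps : ε = (1/2 : ℝ) + (Real.sqrt 3 / 2 : ℝ) * I := by
  have h : (Real.pi : ℂ) * I / 3 = ((Real.pi/3 : ℝ) : ℂ) * I := by
    push_cast; ring
  rw [ε, h, Complex.exp_mul_I, ← Complex.ofReal_cos, ← Complex.ofReal_sin,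
    Real.cos_pi_div_three, Real.sin_pi_div_three]

lemma heps2 : ε ^ 2 = ε - 1 := by
  have h3 : ((Real.sqrt 3 : ℝ) : ℂ) ^ 2 = 3 := by
    norm_cast
    rw [Real.sq_sqrt]; norm_num
  rw [heps]
  have := Complex.I_sq
  push_cast
  linear_combination (I^2/4) * h3 + (3/4 : ℂ) * this
lemma heps3 : ε ^ 3 = -1 := by linear_combination (ε + 1) * heps2


lemma hP : Pmat = !![0, ε^2, 0; ε^4, 0, 0; 0, 0, 1] := by
  ext i j
  fin_cases i <;> fin_cases j <;>
    simp [Pmat, P₀, Matrix.mul_apply, Fin.sum_univ_three, Matrix.diagonal, Matrix.vecHead, Matrix.vecTail]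

lemma hPP : Pmat * Pmat = 1 := by
  rw [hP]
  ext i j
  fin_cases i <;> fin_cases j <;>
    simp [Matrix.mul_apply, Fin.sum_univ_three, Matrix.one_apply, Matrix.vecHead, Matrix.vecTail] <;>
    linear_combination (ε^3 - 1) * heps3

lemma hPinv : Pmat⁻¹ = Pmat := Matrix.inv_eq_right_inv hPP

lemma hsig (X : Matrix (Fin 3) (Fin 3) ℂ) : sigmaHat X = -(Pmat * Xᵀ * Pmat) := by
  rw [sigmaHat, hPinv]

lemma hadd (X Y : Matrix (Fin 3) (Fin 3) ℂ) :
    sigmaHat (X + Y) = sigmaHat X + sigmaHat Y := by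
  simp only [hsig, Matrix.transpose_add, Matrix.mul_add, Matrix.add_mul, neg_add]

lemma hsmul (c : ℂ) (X : Matrix (Fin 3) (Fin 3) ℂ) :
    sigmaHat (c • X) = c • sigmaHat X := by
  simp [hsig, Matrix.transpose_smul, Matrix.mul_smul, Matrix.smul_mul]

lemma hmulkey (A B : Matrix (Fin 3) (Fin 3) ℂ) :
    sigmaHat A * sigmaHat B = Pmat * (Aᵀ * Bᵀ) * Pmat := by
  rw [hsig, hsig, neg_mul_neg]
  calc (Pmat * Aᵀ * Pmat) * (Pmat * Bᵀ * Pmat)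
      = Pmat * Aᵀ * (Pmat * Pmat) * Bᵀ * Pmat := by
        simp only [Matrix.mul_assoc]
    _ = Pmat * (Aᵀ * Bᵀ) * Pmat := by rw [hPP]; simp only [Matrix.mul_one, Matrix.mul_assoc]

lemma hbra (X Y : Matrix (Fin 3) (Fin 3) ℂ) :
    sigmaHat (X * Y - Y * X) = sigmaHat X * sigmaHat Y - sigmaHat Y * sigmaHat X := by
  rw [hmulkey, hmulkey, hsig]
  rw [Matrix.transpose_sub, Matrix.transpose_mul, Matrix.transpose_mul]
  rw [Matrix.mul_sub, Matrix.sub_mul]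
  abel

lemma htr (X : Matrix (Fin 3) (Fin 3) ℂ) (h : X.trace = 0) : (sigmaHat X).trace = 0 := by
  rw [hsig, Matrix.trace_neg, Matrix.trace_mul_cycle, hPP,
    Matrix.one_mul, Matrix.trace_transpose, h, neg_zero]

def Dm : Matrix (Fin 3) (Fin 3) ℂ := Pmat * Pmatᵀ
def Em : Matrix (Fin 3) (Fin 3) ℂ := Pmatᵀ * Pmat

lemma hsq (X : Matrix (Fin 3) (Fin 3) ℂ) :
    sigmaHat (sigmaHat X) = Dm * X * Em := by
  rw [hsig, hsig]
  simp only [Matrix.transpose_neg, Matrix.transpose_mul, Matrix.transpose_transpose,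
    Matrix.mul_neg, Matrix.neg_mul, neg_neg, Dm, Em, Matrix.mul_assoc]

lemma hD3 : Dm * (Dm * Dm) = 1 := by
  have hDm : Dm = Matrix.diagonal ![ε^4, ε^2, 1] := by
    rw [Dm, hP]
    ext i j
    fin_cases i <;> fin_cases j <;>
      simp [Matrix.mul_apply, Fin.sum_univ_three, Matrix.diagonal, Matrix.vecHead,
        Matrix.vecTail, Matrix.transpose_apply] <;>
      first
        | ring1
        | linear_combination (ε^5 - ε^2) * heps3
  rw [hDm, Matrix.diagonal_mul_diagonal, Matrix.diagonal_mul_diagonal]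
  ext i j
  fin_cases i <;> fin_cases j <;>
    simp [Matrix.diagonal, Matrix.one_apply, Matrix.vecHead, Matrix.vecTail] <;>
    first
      | ring1
      | linear_combination (ε^9 - ε^6 + ε^3 - 1) * heps3
      | linear_combination (ε^3 - 1) * heps3

lemma hE3 : Em * (Em * Em) = 1 := by
  have hEm : Em = Matrix.diagonal ![ε^2, ε^4, 1] := by
    rw [Em, hP]
    ext i j
    fin_cases i <;> fin_cases j <;>
      simp [Matrix.mul_apply, Fin.sum_univ_three, Matrix.diagonal, Matrix.vecHead,
        Matrix.vecTail, Matrix.transpose_apply] <;>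
      first
        | ring1
        | linear_combination (ε^5 - ε^2) * heps3
  rw [hEm, Matrix.diagonal_mul_diagonal, Matrix.diagonal_mul_diagonal]
  ext i j
  fin_cases i <;> fin_cases j <;>
    simp [Matrix.diagonal, Matrix.one_apply, Matrix.vecHead, Matrix.vecTail] <;>
    first
      | ring1
      | linear_combination (ε^9 - ε^6 + ε^3 - 1) * heps3
      | linear_combination (ε^3 - 1) * heps3

lemma h6 (X : Matrix (Fin 3) (Fin 3) ℂ) : sigmaHat^[6] X = X := by
  show sigmaHat (sigmaHat (sigmaHat (sigmaHat (sigmaHat (sigmaHat X))))) = X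
  rw [hsq, hsq, hsq]
  calc Dm * (Dm * (Dm * X * Em) * Em) * Em
      = Dm * (Dm * Dm) * X * (Em * (Em * Em)) := by simp only [Matrix.mul_assoc]
    _ = X := by rw [hD3, hE3]; simp
def E01 : Matrix (Fin 3) (Fin 3) ℂ := !![0,1,0;0,0,0;0,0,0]

lemma hE01 : sigmaHat E01 = ε • E01 := by
  rw [hsig, hP]
  ext i j
  fin_cases i <;> fin_cases j <;>
    simp [E01, Matrix.mul_apply, Fin.sum_univ_three, Matrix.smul_apply,
      Matrix.transpose_apply, Matrix.vecHead, Matrix.vecTail, Matrix.vecMul, dotProduct] <;>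
    first
      | ring1
      | linear_combination -ε * heps3

lemma hiter (k : ℕ) : sigmaHat^[k] E01 = ε ^ k • E01 := by
  induction k with
  | zero => simp
  | succ k ih =>
      rw [Function.iterate_succ_apply', ih, hsmul, hE01, smul_smul, pow_succ]

lemma hne (n : ℕ) (h1 : 0 < n) (h2 : n < 6) : ε ^ n ≠ 1 := by
  interval_cases n <;> intro h
  · rw [pow_one] at h
    have h2 := heps2
    rw [h] at h2; norm_num at h2
  · have he : ε = 2 := by linear_combination h - heps2
    rw [he] at h; norm_num at h
  · rw [heps3] at h; norm_num at h
  · have he : ε = -1 := by linear_combination -h + ε * heps3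
    have h2 := heps2
    rw [he] at h2; norm_num at h2
  · have hq : ε ^ 2 = -1 := by linear_combination -h + ε ^ 2 * heps3
    have h0 : ε = 0 := by linear_combination hq - heps2
    rw [h0] at hq; norm_num at hq

/-- `σ̂` is a Lie algebra automorphism of `sl(3,ℂ)` of order exactly 6. -/
theorem stmt0 :
    (∀ X Y : Matrix (Fin 3) (Fin 3) ℂ, sigmaHat (X + Y) = sigmaHat X + sigmaHat Y) ∧
    (∀ (c : ℂ) (X : Matrix (Fin 3) (Fin 3) ℂ), sigmaHat (c • X) = c • sigmaHat X) ∧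
    (∀ X Y : Matrix (Fin 3) (Fin 3) ℂ,
      sigmaHat (X * Y - Y * X) = sigmaHat X * sigmaHat Y - sigmaHat Y * sigmaHat X) ∧
    (∀ X : Matrix (Fin 3) (Fin 3) ℂ, X.trace = 0 → (sigmaHat X).trace = 0) ∧
    Function.Bijective sigmaHat ∧
    (∀ X : Matrix (Fin 3) (Fin 3) ℂ, sigmaHat^[6] X = X) ∧
    (∀ n : ℕ, 0 < n → n < 6 →
      ∃ X : Matrix (Fin 3) (Fin 3) ℂ, X.trace = 0 ∧ sigmaHat^[n] X ≠ X) := by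
  refine ⟨hadd, hsmul, hbra, htr, ?_, h6, ?_⟩
  · refine Function.bijective_iff_has_inverse.mpr ⟨sigmaHat^[5], fun x => ?_, fun x => ?_⟩
    · exact (Function.iterate_succ_apply sigmaHat 5 x).symm.trans (h6 x)
    · exact (Function.iterate_succ_apply' sigmaHat 5 x).symm.trans (h6 x)
  · intro n h1 h2
    refine ⟨E01, by simp [E01, Matrix.trace_fin_three, Matrix.vecHead, Matrix.vecTail], ?_⟩
    rw [hiter n]
    intro hcontra
    apply hne n h1 h2
    have := congrFun (congrFun hcontra 0) 1
    simpa [E01, Matrix.smul_apply] using this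
end
end

section
/- The anti-linear map τ(X) = -X̄ᵀ on sl(3,ℂ) commutes with the automorphism σ̂(X) = -P X^T P⁻¹, where P = diag(ε²,ε⁴,-1)·P₀. -/
open Matrix Complex

noncomputable section

/-- `τ(X) = -X̄ᵀ`, the compact real form involution. -/
def tauC (X : Matrix (Fin 3) (Fin 3) ℂ) : Matrix (Fin 3) (Fin 3) ℂ :=
  -((X.map (starRingEnd ℂ))ᵀ)

lemma eps_ne : ε ≠ 0 := Complex.exp_ne_zero _

lemma conj_eps : (starRingEnd ℂ) ε = ε⁻¹ := by
  have h : (Real.pi : ℂ) * Complex.I / 3 = ((Real.pi / 3 : ℝ) : ℂ) * Complex.I := by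
    push_cast; ring
  rw [ε, ← Complex.exp_conj, ← Complex.exp_neg, h]
  congr 1
  simp [map_ofNat]

lemma Pmat_eq : Pmat = !![0, ε ^ 2, 0; ε ^ 4, 0, 0; 0, 0, 1] := by
  rw [Pmat, P₀]
  ext i j
  fin_cases i <;> fin_cases j <;>
    simp [Matrix.mul_apply, Fin.sum_univ_succ, Matrix.diagonal,
      Matrix.vecHead, Matrix.vecTail]

lemma Pmat_inv : Pmat⁻¹ = !![0, ε⁻¹ ^ 4, 0; ε⁻¹ ^ 2, 0, 0; 0, 0, 1] := by
  apply Matrix.inv_eq_right_inv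
  rw [Pmat_eq]
  ext i j
  fin_cases i <;> fin_cases j <;>
    simp [Matrix.mul_apply, Fin.sum_univ_succ, Matrix.one_apply] <;>
    exact div_self (pow_ne_zero _ eps_ne)

set_option maxHeartbeats 1000000 in
/-- The anti-linear involution `τ(X) = -X̄ᵀ` commutes with `σ̂`. -/
theorem stmt2 : ∀ X : Matrix (Fin 3) (Fin 3) ℂ, sigmaHat (tauC X) = tauC (sigmaHat X) := by
  intro X
  simp only [sigmaHat, tauC]
  rw [Pmat_inv, Pmat_eq]
  ext i j
  fin_cases i <;> fin_cases j <;>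
    simp [Matrix.mul_apply, Matrix.vecMul, dotProduct, Fin.sum_univ_succ,
      conj_eps, map_inv₀, map_pow, Matrix.vecHead, Matrix.vecTail] <;>
    ring
end
end
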